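/- arXiv:2302.00991 — 2 statements merged into one kernel-verified Lean document; each statement's English description precedes it below -/
import Mathlib

section
/- Let R be an NP-ring. If in a short exact sequence 0 → A → B → C → 0 of R-modules both B and C are strongly φ-w-flat, then A is strongly φ-w-flat. -/
open CategoryTheory

noncomputable section

def IsGV (R : Type) [CommRing R] (J : Ideal R) : Prop :=
  J.FG ∧ Function.Bijective (fun r : R => (r • J.subtype : J →ₗ[R] R))

def IsGVTorsion (R : Type) [CommRing R] (M : Type) [AddCommGroup M] [Module R M] : Prop :=
  ∀ x : M, ∃ J : Ideal R, IsGV R J ∧ ∀ j ∈ J, j • x = 0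

def IsPhiTorsion (R : Type) [CommRing R] (M : Type) [AddCommGroup M] [Module R M] : Prop :=
  ∀ x : M, ∃ I : Ideal R, ¬ I ≤ nilradical R ∧ ∀ a ∈ I, a • x = 0

/-- `Tor_n^R(T, M)` as an object of `ModuleCat R`. -/
def TorMod (R : Type) [CommRing R] (n : ℕ) (T M : Type) [AddCommGroup T] [Module R T]
    [AddCommGroup M] [Module R M] : ModuleCat R :=
  ((Tor (ModuleCat R) n).obj (ModuleCat.of R T)).obj (ModuleCat.of R M)

/-- `M` is strongly φ-w-flat if `Tor_n^R(T, M)` is GV-torsion for every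
φ-torsion module `T` and every `n ≥ 1`. -/
def IsStronglyPhiWFlat (R : Type) [CommRing R] (M : Type) [AddCommGroup M] [Module R M] : Prop :=
  ∀ (T : Type) (_ : AddCommGroup T) (_ : Module R T), IsPhiTorsion R T →
    ∀ n : ℕ, 1 ≤ n → IsGVTorsion R (TorMod R n T M)

namespace StrongPhiWFlatAux

variable {R : Type} [CommRing R]

lemma isGV_top : IsGV R ⊤ := by
  constructor
  · exact ⟨{1}, by simp⟩
  constructor
  · intro r s h
    have := LinearMap.congr_fun h ⟨1, Submodule.mem_top⟩
    simpa using this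
  · intro φ
    refine ⟨φ ⟨1, Submodule.mem_top⟩, ?_⟩
    ext x
    have hx : (x : ↥(⊤ : Ideal R)) = (x : R) • ⟨1, Submodule.mem_top⟩ := by
      ext; simp
    have h2 : φ x = (x : R) * φ ⟨1, Submodule.mem_top⟩ := by
      conv_lhs => rw [hx]
      rw [map_smul, smul_eq_mul]
    simp only [LinearMap.smul_apply, Submodule.coe_subtype, smul_eq_mul, h2]
    ring

lemma isGV_mul {J K : Ideal R} (hJ : IsGV R J) (hK : IsGV R K) : IsGV R (J * K) := by
  obtain ⟨hJfg, hJinj, hJsurj⟩ := hJ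
  obtain ⟨hKfg, hKinj, hKsurj⟩ := hK
  refine ⟨Submodule.FG.mul hJfg hKfg, ?_, ?_⟩
  · -- injectivity
    intro r s h
    have hx : ∀ x : R, x ∈ J * K → r * x = s * x := fun x hxm =>
      LinearMap.congr_fun h (⟨x, hxm⟩ : ↥(J * K))
    have h1 : ∀ k : ↥K, r * k = s * k := by
      intro k
      have heq : (fun r : R => r • J.subtype) (r * (k : R))
          = (fun r : R => r • J.subtype) (s * (k : R)) := by
        ext j
        simp only [LinearMap.smul_apply, Submodule.coe_subtype, smul_eq_mul]
        have := hx ((j : R) * (k : R)) (Ideal.mul_mem_mul j.2 k.2)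
        linear_combination this
      exact hJinj heq
    apply hKinj
    ext k
    simp only [LinearMap.smul_apply, Submodule.coe_subtype, smul_eq_mul]
    exact h1 k
  · -- surjectivity
    intro φ
    -- the linear version of r ↦ r • J.subtype
    let ΦJ : R →ₗ[R] (↥J →ₗ[R] R) := LinearMap.toSpanSingleton R _ J.subtype
    have hΦJ : Function.Bijective ΦJ := ⟨hJinj, hJsurj⟩
    let eJ : R ≃ₗ[R] (↥J →ₗ[R] R) := LinearEquiv.ofBijective ΦJ hΦJ
    have eJ_apply : ∀ (r : R) (j : ↥J), eJ r j = r * j := fun r j => rfl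
    -- the bilinear map K → J → J*K
    let Bil : ↥K →ₗ[R] ↥J →ₗ[R] ↥(J * K) := LinearMap.mk₂ R
      (fun k j => (⟨(j : R) * (k : R), Ideal.mul_mem_mul j.2 k.2⟩ : ↥(J * K)))
      (fun a b j => Subtype.ext (by push_cast; ring))
      (fun c a j => Subtype.ext (by push_cast [smul_eq_mul]; ring))
      (fun a j j' => Subtype.ext (by push_cast; ring))
      (fun c a j => Subtype.ext (by push_cast [smul_eq_mul]; ring))
    let Ψ : ↥K →ₗ[R] (↥J →ₗ[R] R) := (LinearMap.llcomp R ↥J ↥(J * K) R φ) ∘ₗ Bil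
    have Ψ_apply : ∀ (k : ↥K) (j : ↥J),
        Ψ k j = φ ⟨(j : R) * (k : R), Ideal.mul_mem_mul j.2 k.2⟩ := fun k j => rfl
    let G : ↥K →ₗ[R] R := (eJ.symm : (↥J →ₗ[R] R) →ₗ[R] R) ∘ₗ Ψ
    obtain ⟨s, hs⟩ := hKsurj G
    have hGk : ∀ k : ↥K, Ψ k = eJ (s * (k : R)) := by
      intro k
      have h1 : G k = s * (k : R) := by
        have := LinearMap.congr_fun hs k
        simpa using this.symm
      have h2 : eJ (G k) = Ψ k := eJ.apply_symm_apply (Ψ k)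
      rw [← h2, h1]
    refine ⟨s, ?_⟩
    ext x
    simp only [LinearMap.smul_apply, Submodule.coe_subtype, smul_eq_mul]
    obtain ⟨x, hx⟩ := x
    show s * x = φ ⟨x, hx⟩
    induction hx using Submodule.mul_induction_on' with
    | mem_mul_mem m hm n hn =>
        have h2 : φ ⟨m * n, Ideal.mul_mem_mul hm hn⟩ = Ψ ⟨n, hn⟩ ⟨m, hm⟩ := rfl
        have h3 : Ψ ⟨n, hn⟩ ⟨m, hm⟩ = (s * n) * m := by rw [hGk ⟨n, hn⟩, eJ_apply]
        calc s * (m * n) = (s * n) * m := by ring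
          _ = φ ⟨m * n, Ideal.mul_mem_mul hm hn⟩ := by rw [h2, h3]
    | add x hxm y hym hx hy =>
        have : (⟨x + y, add_mem hxm hym⟩ : ↥(J * K)) = ⟨x, hxm⟩ + ⟨y, hym⟩ := rfl
        rw [this, map_add, ← hx, ← hy]
        ring

lemma isGVTorsion_of_exact {X Y Z : ModuleCat R} (d : X ⟶ Y) (p : Y ⟶ Z)
    (hex : ∀ y : Y, p y = 0 → ∃ x : X, d x = y)
    (hX : IsGVTorsion R X) (hZ : IsGVTorsion R Z) : IsGVTorsion R Y := by
  classical
  intro y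
  obtain ⟨J, hJ, hJy⟩ := hZ (p y)
  obtain ⟨s, hs⟩ := hJ.1
  have claim : ∀ s' : Finset R, (∀ j ∈ s', j ∈ J) →
      ∃ K : Ideal R, IsGV R K ∧ ∀ j ∈ s', ∀ k ∈ K, k • (j • y) = 0 := by
    intro s'
    induction s' using Finset.induction_on with
    | empty => exact fun _ => ⟨⊤, isGV_top, by intro j hj; simp at hj⟩
    | @insert a s'' ha ih =>
        intro hmem
        obtain ⟨Ks, hKs, hKs0⟩ := ih (fun j hj => hmem j (Finset.mem_insert_of_mem hj))
        have hpa : p (a • y) = 0 := by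
          rw [map_smul]
          exact hJy a (hmem a (Finset.mem_insert_self a s''))
        obtain ⟨x, hxd⟩ := hex (a • y) hpa
        obtain ⟨Ka, hKa, hKa0⟩ := hX x
        refine ⟨Ka * Ks, isGV_mul hKa hKs, ?_⟩
        intro j hj k hk
        rcases Finset.mem_insert.1 hj with rfl | hj'
        · have hkKa : k ∈ Ka := Ideal.mul_le_left hk
          rw [← hxd, ← map_smul, hKa0 k hkKa, map_zero]
        · exact hKs0 j hj' k (Ideal.mul_le_right hk)
  obtain ⟨K, hK, hK0⟩ := claim s (fun j hj => hs ▸ Ideal.subset_span hj)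
  refine ⟨J * K, isGV_mul hJ hK, ?_⟩
  intro l hl
  induction hl using Submodule.mul_induction_on' with
  | mem_mul_mem m hm n hn =>
      rw [← hs] at hm
      induction hm using Submodule.span_induction with
      | mem j hj => rw [mul_comm, mul_smul]; exact hK0 j hj n hn
      | zero => simp
      | add u v _ _ hu hv => rw [add_mul, add_smul, hu, hv, add_zero]
      | smul c u _ hu => rw [smul_eq_mul, mul_assoc, mul_smul, hu, smul_zero]
  | add u _ v _ hu hv => rw [add_smul, hu, hv, add_zero]

lemma isGVTorsion_of_iso {M N : ModuleCat R} (e : M ≅ N) (h : IsGVTorsion R M) :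
    IsGVTorsion R N := by
  intro x
  obtain ⟨J, hJ, hJx⟩ := h (e.inv x)
  refine ⟨J, hJ, fun j hj => ?_⟩
  have h1 : e.hom (j • e.inv x) = j • e.hom (e.inv x) := map_smul _ _ _
  have h2 : e.hom (e.inv x) = x := by simp
  rw [hJx j hj, map_zero] at h1
  rw [h2] at h1
  exact h1.symm

structure MySES (R : Type) [CommRing R] : Type 1 where
  A : Type
  B : Type
  C : Type
  [accA : AddCommGroup A] [accB : AddCommGroup B] [accC : AddCommGroup C]
  [modA : Module R A] [modB : Module R B] [modC : Module R C]
  f : A →ₗ[R] B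
  g : B →ₗ[R] C
  hf : Function.Injective f
  hg : Function.Surjective g
  hfg : LinearMap.range f = LinearMap.ker g

attribute [instance] MySES.accA MySES.accB MySES.accC MySES.modA MySES.modB MySES.modC

namespace MySES

variable {R : Type} [CommRing R] (S : MySES R)

abbrev FA := S.A →₀ R
abbrev FC := S.C →₀ R
abbrev FB := S.FA × S.FC

def εA : S.FA →ₗ[R] S.A := Finsupp.linearCombination R _root_.id
def εC : S.FC →ₗ[R] S.C := Finsupp.linearCombination R _root_.id
def σ : S.FC →ₗ[R] S.B := Finsupp.linearCombination R (fun c => Function.surjInv S.hg c)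
def εB : S.FB →ₗ[R] S.B := (S.f ∘ₗ S.εA).coprod S.σ

lemma εA_surj : Function.Surjective S.εA := Finsupp.linearCombination_id_surjective R S.A
lemma εC_surj : Function.Surjective S.εC := Finsupp.linearCombination_id_surjective R S.C

lemma g_σ (z : S.FC) : S.g (S.σ z) = S.εC z := by
  have : S.g ∘ₗ S.σ = S.εC := by
    ext c
    simp [σ, εC, Function.surjInv_eq S.hg]
  exact LinearMap.congr_fun this z

lemma gf_zero (a : S.A) : S.g (S.f a) = 0 := by
  have : S.f a ∈ LinearMap.ker S.g := S.hfg ▸ LinearMap.mem_range_self S.f a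
  exact this

lemma εB_apply (x : S.FA) (z : S.FC) : S.εB (x, z) = S.f (S.εA x) + S.σ z := rfl

lemma εB_inl (x : S.FA) : S.εB (x, 0) = S.f (S.εA x) := by
  rw [εB_apply, map_zero, add_zero]

lemma g_εB (w : S.FB) : S.g (S.εB w) = S.εC w.2 := by
  obtain ⟨x, z⟩ := w
  rw [εB_apply, map_add, gf_zero, zero_add, g_σ]

lemma εB_surj : Function.Surjective S.εB := by
  intro b
  obtain ⟨zb, hzb⟩ := S.εC_surj (S.g b)
  have h1 : S.g (b - S.σ zb) = 0 := by
    rw [map_sub, g_σ, hzb, sub_self]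
  have h2 : b - S.σ zb ∈ LinearMap.range S.f := S.hfg ▸ h1
  obtain ⟨a, ha⟩ := h2
  obtain ⟨x, hx⟩ := S.εA_surj a
  exact ⟨(x, zb), by rw [εB_apply, hx, ha]; abel⟩

/-- The next stage of the tower: the short exact sequence of syzygies. -/
def step : MySES R where
  A := LinearMap.ker S.εA
  B := LinearMap.ker S.εB
  C := LinearMap.ker S.εC
  f := LinearMap.codRestrict _ ((LinearMap.inl R S.FA S.FC) ∘ₗ (LinearMap.ker S.εA).subtype)
    (fun a => by
      simp only [LinearMap.mem_ker, LinearMap.coe_comp, Function.comp_apply,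
        Submodule.coe_subtype, LinearMap.inl_apply]
      rw [εB_inl]
      have : S.εA (a : S.FA) = 0 := a.2
      rw [this, map_zero])
  g := LinearMap.codRestrict _ ((LinearMap.snd R S.FA S.FC) ∘ₗ (LinearMap.ker S.εB).subtype)
    (fun w => by
      simp only [LinearMap.mem_ker, LinearMap.coe_comp, Function.comp_apply,
        Submodule.coe_subtype, LinearMap.snd_apply]
      have h1 : S.εC (w : S.FB).2 = S.g (S.εB (w : S.FB)) := (S.g_εB _).symm
      have h2 : S.εB (w : S.FB) = 0 := w.2
      rw [h1, h2, map_zero])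
  hf := by
    intro a b h
    have h1 : ((a : S.FA), (0 : S.FC)) = ((b : S.FA), (0 : S.FC)) := congrArg Subtype.val h
    exact Subtype.ext (congrArg Prod.fst h1)
  hg := by
    rintro ⟨z, hz⟩
    have hz' : S.εC z = 0 := hz
    have h1 : S.g (S.σ z) = 0 := by rw [g_σ, hz']
    have h2 : S.σ z ∈ LinearMap.range S.f := S.hfg ▸ h1
    obtain ⟨a, ha⟩ := h2
    obtain ⟨x, hx⟩ := S.εA_surj a
    have hw : S.εB (-x, z) = 0 := by
      rw [εB_apply, map_neg, hx, map_neg, ha]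
      abel
    refine ⟨⟨(-x, z), hw⟩, ?_⟩
    exact Subtype.ext rfl
  hfg := by
    apply le_antisymm
    · rintro w ⟨a, rfl⟩
      exact Subtype.ext rfl
    · rintro ⟨⟨x, z⟩, hw⟩ hker
      have hz : z = 0 := congrArg Subtype.val hker
      subst hz
      have hw' : S.εB (x, 0) = 0 := hw
      rw [εB_inl] at hw'
      have hx : S.εA x = 0 := S.hf (by rw [hw', map_zero])
      exact ⟨⟨x, hx⟩, Subtype.ext rfl⟩

end MySES

/-- The tower of syzygy short exact sequences. -/
def stage {R : Type} [CommRing R] (S₀ : MySES R) : ℕ → MySES R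
  | 0 => S₀
  | n + 1 => (stage S₀ n).step

section Tower

variable {R : Type} [CommRing R] (S₀ : MySES R)

-- differentials
def dA (n : ℕ) : (stage S₀ (n+1)).FA →ₗ[R] (stage S₀ n).FA :=
  (LinearMap.ker (stage S₀ n).εA).subtype ∘ₗ (stage S₀ (n+1)).εA

def dB (n : ℕ) : (stage S₀ (n+1)).FB →ₗ[R] (stage S₀ n).FB :=
  (LinearMap.ker (stage S₀ n).εB).subtype ∘ₗ (stage S₀ (n+1)).εB

def dC (n : ℕ) : (stage S₀ (n+1)).FC →ₗ[R] (stage S₀ n).FC :=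
  (LinearMap.ker (stage S₀ n).εC).subtype ∘ₗ (stage S₀ (n+1)).εC


lemma dA_dA (n : ℕ) (x : (stage S₀ (n+2)).FA) : dA S₀ n (dA S₀ (n+1) x) = 0 := by
  have h : (stage S₀ (n+1)).εA (dA S₀ (n+1) x) = 0 := ((stage S₀ (n+2)).εA x).2
  show (LinearMap.ker (stage S₀ n).εA).subtype ((stage S₀ (n+1)).εA (dA S₀ (n+1) x)) = 0
  rw [h]; rfl

lemma dA_exact (n : ℕ) (x : (stage S₀ n).FA) (hx : (stage S₀ n).εA x = 0) :
    ∃ y : (stage S₀ (n+1)).FA, dA S₀ n y = x := by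
  obtain ⟨y, hy⟩ := (stage S₀ (n+1)).εA_surj ⟨x, hx⟩
  refine ⟨y, ?_⟩
  show (LinearMap.ker (stage S₀ n).εA).subtype ((stage S₀ (n+1)).εA y) = x
  rw [hy]
  rfl

lemma dA_exact_succ (n : ℕ) (x : (stage S₀ (n+1)).FA) (hx : dA S₀ n x = 0) :
    ∃ y : (stage S₀ (n+2)).FA, dA S₀ (n+1) y = x := by
  apply dA_exact
  exact Subtype.ext hx

lemma dB_dB (n : ℕ) (x : (stage S₀ (n+2)).FB) : dB S₀ n (dB S₀ (n+1) x) = 0 := by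
  have h : (stage S₀ (n+1)).εB (dB S₀ (n+1) x) = 0 := ((stage S₀ (n+2)).εB x).2
  show (LinearMap.ker (stage S₀ n).εB).subtype ((stage S₀ (n+1)).εB (dB S₀ (n+1) x)) = 0
  rw [h]; rfl

lemma dB_exact (n : ℕ) (x : (stage S₀ n).FB) (hx : (stage S₀ n).εB x = 0) :
    ∃ y : (stage S₀ (n+1)).FB, dB S₀ n y = x := by
  obtain ⟨y, hy⟩ := (stage S₀ (n+1)).εB_surj ⟨x, hx⟩
  refine ⟨y, ?_⟩
  show (LinearMap.ker (stage S₀ n).εB).subtype ((stage S₀ (n+1)).εB y) = x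
  rw [hy]
  rfl

lemma dB_exact_succ (n : ℕ) (x : (stage S₀ (n+1)).FB) (hx : dB S₀ n x = 0) :
    ∃ y : (stage S₀ (n+2)).FB, dB S₀ (n+1) y = x := by
  apply dB_exact
  exact Subtype.ext hx

lemma dC_dC (n : ℕ) (x : (stage S₀ (n+2)).FC) : dC S₀ n (dC S₀ (n+1) x) = 0 := by
  have h : (stage S₀ (n+1)).εC (dC S₀ (n+1) x) = 0 := ((stage S₀ (n+2)).εC x).2
  show (LinearMap.ker (stage S₀ n).εC).subtype ((stage S₀ (n+1)).εC (dC S₀ (n+1) x)) = 0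
  rw [h]; rfl

lemma dC_exact (n : ℕ) (x : (stage S₀ n).FC) (hx : (stage S₀ n).εC x = 0) :
    ∃ y : (stage S₀ (n+1)).FC, dC S₀ n y = x := by
  obtain ⟨y, hy⟩ := (stage S₀ (n+1)).εC_surj ⟨x, hx⟩
  refine ⟨y, ?_⟩
  show (LinearMap.ker (stage S₀ n).εC).subtype ((stage S₀ (n+1)).εC y) = x
  rw [hy]
  rfl

lemma dC_exact_succ (n : ℕ) (x : (stage S₀ (n+1)).FC) (hx : dC S₀ n x = 0) :
    ∃ y : (stage S₀ (n+2)).FC, dC S₀ (n+1) y = x := by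
  apply dC_exact
  exact Subtype.ext hx

lemma dB_inl (n : ℕ) (x : (stage S₀ (n+1)).FA) :
    dB S₀ n (x, 0) = (dA S₀ n x, 0) := by
  show (LinearMap.ker (stage S₀ n).εB).subtype ((stage S₀ (n+1)).εB (x, 0)) = _
  rw [(stage S₀ (n+1)).εB_inl x]
  rfl

lemma dC_snd (n : ℕ) (w : (stage S₀ (n+1)).FB) :
    dC S₀ n w.2 = (dB S₀ n w).2 :=
  (congrArg Subtype.val ((stage S₀ (n+1)).g_εB w)).symm

end Tower

open HomologicalComplex

/-- Build a projective resolution in `ModuleCat R` from explicit exactness data. -/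
def mkProjRes (M : ModuleCat R) (Xs : ℕ → ModuleCat R) (hproj : ∀ n, Projective (Xs n))
    (d : ∀ n, Xs (n+1) ⟶ Xs n) (hdd : ∀ n, d (n+1) ≫ d n = 0)
    (ε : Xs 0 ⟶ M) (hdε : d 0 ≫ ε = 0)
    (hsurj : Function.Surjective ε)
    (hex0 : ∀ x : Xs 0, ε x = 0 → ∃ y, d 0 y = x)
    (hexs : ∀ n (x : Xs (n+1)), d n x = 0 → ∃ y, d (n+1) y = x) :
    ProjectiveResolution M where
  complex := ChainComplex.of Xs d hdd
  projective n := hproj n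
  π := (ChainComplex.toSingle₀Equiv _ _).symm ⟨ε, by
    have h10 : (ChainComplex.of Xs d hdd).d 1 0 = d 0 := ChainComplex.of_d Xs d 0
    rw [h10]; exact hdε⟩
  quasiIso := ⟨fun n => by
    cases n with
    | zero =>
      rw [ChainComplex.quasiIsoAt₀_iff, ShortComplex.quasiIso_iff_of_zeros']
      rotate_left
      · rfl
      · rfl
      · rfl
      constructor
      · rw [ShortComplex.moduleCat_exact_iff]
        intro x hx
        simp only [HomologicalComplex.shortComplexFunctor'_map_τ₂,
          ChainComplex.toSingle₀Equiv_symm_apply_f_zero] at hx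
        obtain ⟨y, hy⟩ := hex0 x hx
        refine ⟨y, ?_⟩
        have h10 : (ChainComplex.of Xs d hdd).d 1 0 = d 0 := ChainComplex.of_d Xs d 0
        show (ChainComplex.of Xs d hdd).d 1 0 y = x
        rw [h10]
        exact hy
      · simp only [HomologicalComplex.shortComplexFunctor'_map_τ₂,
          ChainComplex.toSingle₀Equiv_symm_apply_f_zero]
        exact (ModuleCat.epi_iff_surjective ε).2 hsurj
    | succ n =>
      rw [quasiIsoAt_iff_exactAt' _ _ (ChainComplex.exactAt_succ_single_obj _ _)]
      rw [HomologicalComplex.exactAt_iff' _ (n+2) (n+1) n (by simp) (by simp)]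
      rw [ShortComplex.moduleCat_exact_iff]
      intro x hx
      have hx' : d n x = 0 := by
        rw [← ChainComplex.of_d Xs d n]
        exact hx
      obtain ⟨y, hy⟩ := hexs n x hx'
      refine ⟨y, ?_⟩
      have h21 : (ChainComplex.of Xs d hdd).d (n+2) (n+1) = d (n+1) :=
        ChainComplex.of_d Xs d (n+1)
      show (ChainComplex.of Xs d hdd).d (n+2) (n+1) y = x
      rw [h21]
      exact hy⟩


section Resolutions

variable (S₀ : MySES R)

def resA : ProjectiveResolution (ModuleCat.of R S₀.A) :=
  mkProjRes _ (fun n => ModuleCat.of R ((stage S₀ n).FA))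
    (fun _ => ModuleCat.projective_of_free Finsupp.basisSingleOne)
    (fun n => ModuleCat.ofHom (dA S₀ n))
    (fun n => by ext1; apply LinearMap.ext; intro x; exact dA_dA S₀ n x)
    (ModuleCat.ofHom S₀.εA)
    (by ext1; apply LinearMap.ext; intro x; exact LinearMap.mem_ker.1 ((stage S₀ 1).εA x).2)
    (S₀.εA_surj)
    (fun x hx => dA_exact S₀ 0 x hx)
    (fun n x hx => dA_exact_succ S₀ n x hx)

def resB : ProjectiveResolution (ModuleCat.of R S₀.B) :=
  mkProjRes _ (fun n => ModuleCat.of R ((stage S₀ n).FB))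
    (fun _ => ModuleCat.projective_of_free (Finsupp.basisSingleOne.prod Finsupp.basisSingleOne))
    (fun n => ModuleCat.ofHom (dB S₀ n))
    (fun n => by ext1; apply LinearMap.ext; intro x; exact dB_dB S₀ n x)
    (ModuleCat.ofHom S₀.εB)
    (by ext1; apply LinearMap.ext; intro x; exact LinearMap.mem_ker.1 ((stage S₀ 1).εB x).2)
    (S₀.εB_surj)
    (fun x hx => dB_exact S₀ 0 x hx)
    (fun n x hx => dB_exact_succ S₀ n x hx)

def resC : ProjectiveResolution (ModuleCat.of R S₀.C) :=
  mkProjRes _ (fun n => ModuleCat.of R ((stage S₀ n).FC))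
    (fun _ => ModuleCat.projective_of_free Finsupp.basisSingleOne)
    (fun n => ModuleCat.ofHom (dC S₀ n))
    (fun n => by ext1; apply LinearMap.ext; intro x; exact dC_dC S₀ n x)
    (ModuleCat.ofHom S₀.εC)
    (by ext1; apply LinearMap.ext; intro x; exact LinearMap.mem_ker.1 ((stage S₀ 1).εC x).2)
    (S₀.εC_surj)
    (fun x hx => dC_exact S₀ 0 x hx)
    (fun n x hx => dC_exact_succ S₀ n x hx)

lemma resA_d (j : ℕ) : (resA S₀).complex.d (j+1) j = ModuleCat.ofHom (dA S₀ j) :=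
  ChainComplex.of_d (fun n => ModuleCat.of R ((stage S₀ n).FA)) (fun n => ModuleCat.ofHom (dA S₀ n)) j

lemma resB_d (j : ℕ) : (resB S₀).complex.d (j+1) j = ModuleCat.ofHom (dB S₀ j) :=
  ChainComplex.of_d (fun n => ModuleCat.of R ((stage S₀ n).FB)) (fun n => ModuleCat.ofHom (dB S₀ n)) j

lemma resC_d (j : ℕ) : (resC S₀).complex.d (j+1) j = ModuleCat.ofHom (dC S₀ j) :=
  ChainComplex.of_d (fun n => ModuleCat.of R ((stage S₀ n).FC)) (fun n => ModuleCat.ofHom (dC S₀ n)) j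

def φAB : (resA S₀).complex ⟶ (resB S₀).complex where
  f n := ModuleCat.ofHom (LinearMap.inl R ((stage S₀ n).FA) ((stage S₀ n).FC) :
    (stage S₀ n).FA →ₗ[R] (stage S₀ n).FB)
  comm' := by
    intro i j hij
    obtain rfl : j + 1 = i := hij
    rw [resA_d, resB_d]
    ext1; apply LinearMap.ext; intro x
    exact dB_inl S₀ j x

def ψBC : (resB S₀).complex ⟶ (resC S₀).complex where
  f n := ModuleCat.ofHom (LinearMap.snd R ((stage S₀ n).FA) ((stage S₀ n).FC) :
    (stage S₀ n).FB →ₗ[R] (stage S₀ n).FC)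
  comm' := by
    intro i j hij
    obtain rfl : j + 1 = i := hij
    rw [resB_d, resC_d]
    ext1; apply LinearMap.ext; intro w
    exact dC_snd S₀ j w

def scRes : ShortComplex (ChainComplex (ModuleCat R) ℕ) :=
  ShortComplex.mk (φAB S₀) (ψBC S₀) (by ext n x; rfl)

def scSplit (i : ℕ) :
    ((scRes S₀).map (HomologicalComplex.eval (ModuleCat R) (ComplexShape.down ℕ) i)).Splitting where
  r := ModuleCat.ofHom (LinearMap.fst R ((stage S₀ i).FA) ((stage S₀ i).FC) :
    (stage S₀ i).FB →ₗ[R] (stage S₀ i).FA)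
  s := ModuleCat.ofHom (LinearMap.inr R ((stage S₀ i).FA) ((stage S₀ i).FC) :
    (stage S₀ i).FC →ₗ[R] (stage S₀ i).FB)
  f_r := by ext x; rfl
  s_g := by ext x; rfl
  id := by
    ext1; apply LinearMap.ext; intro x
    show ((x.1, 0) : (stage S₀ i).FB) + ((0 : (stage S₀ i).FA), x.2) = x
    simp
    rfl

lemma scRes_shortExact : (scRes S₀).ShortExact :=
  HomologicalComplex.shortExact_of_degreewise_shortExact _ (fun i => (scSplit S₀ i).shortExact)

end Resolutions

section Tensor

variable (S₀ : MySES R) (T : Type) [AddCommGroup T] [Module R T]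

def Ftens : ModuleCat R ⥤ ModuleCat R :=
  (MonoidalCategory.tensoringLeft (ModuleCat R)).obj (ModuleCat.of R T)

instance : (Ftens (R := R) T).Additive := by
  unfold Ftens
  infer_instance

def scT : ShortComplex (ChainComplex (ModuleCat R) ℕ) :=
  (scRes S₀).map ((Ftens (R := R) T).mapHomologicalComplex (ComplexShape.down ℕ))

lemma scT_shortExact : (scT S₀ T).ShortExact :=
  HomologicalComplex.shortExact_of_degreewise_shortExact _
    (fun i => ((scSplit S₀ i).map (Ftens (R := R) T)).shortExact)

end Tensor

end StrongPhiWFlatAux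

open StrongPhiWFlatAux in
theorem stronglyPhiWFlat_of_ses_left (R : Type) [CommRing R] (hNP : (nilradical R).IsPrime)
    (A B C : Type) [AddCommGroup A] [Module R A] [AddCommGroup B] [Module R B]
    [AddCommGroup C] [Module R C]
    (f : A →ₗ[R] B) (g : B →ₗ[R] C) (hf : Function.Injective f)
    (hg : Function.Surjective g) (hfg : LinearMap.range f = LinearMap.ker g)
    (hB : IsStronglyPhiWFlat R B) (hC : IsStronglyPhiWFlat R C) :
    IsStronglyPhiWFlat R A := by
  intro T _accT _modT hT n hn
  classical
  let S₀ : MySES R := { A := A, B := B, C := C, f := f, g := g, hf := hf, hg := hg, hfg := hfg }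
  let F : ModuleCat R ⥤ ModuleCat R := Ftens (R := R) T
  have hexact := (scT_shortExact S₀ T).homology_exact₁ (n+1) n rfl
  rw [ShortComplex.moduleCat_exact_iff] at hexact
  have hXgv : IsGVTorsion R
      (((F.mapHomologicalComplex (ComplexShape.down ℕ)).obj (resC S₀).complex).homology (n+1)) :=
    isGVTorsion_of_iso ((resC S₀).isoLeftDerivedObj F (n+1))
      (hC T _accT _modT hT (n+1) (by omega))
  have hZgv : IsGVTorsion R
      (((F.mapHomologicalComplex (ComplexShape.down ℕ)).obj (resB S₀).complex).homology n) :=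
    isGVTorsion_of_iso ((resB S₀).isoLeftDerivedObj F n)
      (hB T _accT _modT hT n hn)
  have hmid : IsGVTorsion R
      (((F.mapHomologicalComplex (ComplexShape.down ℕ)).obj (resA S₀).complex).homology n) :=
    isGVTorsion_of_exact ((scT_shortExact S₀ T).δ (n+1) n rfl)
      (HomologicalComplex.homologyMap (scT S₀ T).f n) hexact hXgv hZgv
  exact isGVTorsion_of_iso ((resA S₀).isoLeftDerivedObj F n).symm hmid
end
end

section
/- Let R be an NP-ring. If in a short exact sequence 0 → A → B → C → 0 of R-modules both A and C are strongly φ-w-flat, then B is strongly φ-w-flat. -/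
open CategoryTheory

noncomputable section

section GVLemmas
variable {R : Type} [CommRing R]

lemma isGV_inj {J : Ideal R} (hJ : IsGV R J) {r s : R}
    (h : ∀ j ∈ J, r * j = s * j) : r = s := by
  apply hJ.2.1
  ext ⟨j, hj⟩
  simpa [smul_eq_mul] using h j hj

lemma isGV_surj {J : Ideal R} (hJ : IsGV R J) (φ : J →ₗ[R] R) :
    ∃ r : R, ∀ j (hj : j ∈ J), φ ⟨j, hj⟩ = r * j := by
  obtain ⟨r, hr⟩ := hJ.2.2 φ
  refine ⟨r, fun j hj => ?_⟩
  have := congrArg (fun ψ : J →ₗ[R] R => ψ ⟨j, hj⟩) hr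
  simpa [smul_eq_mul, mul_comm] using this.symm

lemma isGV_top : IsGV R (⊤ : Ideal R) := by
  refine ⟨⟨{1}, by simp⟩, ?_, ?_⟩
  · intro r s h
    have := congrArg (fun ψ : (⊤ : Ideal R) →ₗ[R] R => ψ ⟨1, trivial⟩) h
    simpa using this
  · intro φ
    refine ⟨φ ⟨1, trivial⟩, ?_⟩
    ext ⟨x, hx⟩
    have e : (⟨x, hx⟩ : (⊤ : Ideal R)) = x • ⟨1, trivial⟩ := by
      apply Subtype.ext; simp
    rw [e, map_smul]
    simp [smul_eq_mul, mul_comm]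

lemma isGV_mul {J₁ J₂ : Ideal R} (h₁ : IsGV R J₁) (h₂ : IsGV R J₂) :
    IsGV R (J₁ * J₂) := by
  refine ⟨Submodule.FG.mul h₁.1 h₂.1, ?_, ?_⟩
  · intro r s h
    have h' : ∀ x ∈ J₁ * J₂, r * x = s * x := by
      intro x hx
      have := congrArg (fun ψ : (J₁ * J₂ : Ideal R) →ₗ[R] R => ψ ⟨x, hx⟩) h
      simpa [smul_eq_mul] using this
    apply isGV_inj h₂
    intro j₂ hj₂
    apply isGV_inj h₁
    intro j₁ hj₁
    have := h' (j₁ * j₂) (Ideal.mul_mem_mul hj₁ hj₂)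
    linear_combination this
  · intro φ
    have key : ∀ q (hq : q ∈ J₂), ∃ r : R, ∀ j (hj : j ∈ J₁),
        φ ⟨j * q, Ideal.mul_mem_mul hj hq⟩ = r * j := by
      intro q hq
      let ψ : J₁ →ₗ[R] R :=
      { toFun := fun j => φ ⟨j * q, Ideal.mul_mem_mul j.2 hq⟩
        map_add' := by
          intro a b
          have e : (⟨(↑(a + b) : R) * q, Ideal.mul_mem_mul (a + b).2 hq⟩ : (J₁ * J₂ : Ideal R))
              = ⟨(a : R) * q, Ideal.mul_mem_mul a.2 hq⟩ + ⟨(b : R) * q, Ideal.mul_mem_mul b.2 hq⟩ := by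
            apply Subtype.ext; simp [add_mul]
          simp only [e, map_add]
        map_smul' := by
          intro c a
          have e : (⟨(↑(c • a) : R) * q, Ideal.mul_mem_mul (c • a).2 hq⟩ : (J₁ * J₂ : Ideal R))
              = c • ⟨(a : R) * q, Ideal.mul_mem_mul a.2 hq⟩ := by
            apply Subtype.ext; simp [smul_eq_mul]; ring
          simp only [e, map_smul, smul_eq_mul, RingHom.id_apply] }
      obtain ⟨r, hr⟩ := isGV_surj h₁ ψ
      exact ⟨r, fun j hj => hr j hj⟩
    choose! rq hrq using key
    let χ : J₂ →ₗ[R] R :=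
    { toFun := fun q => rq q
      map_add' := by
        rintro ⟨a, ha⟩ ⟨b, hb⟩
        apply isGV_inj h₁
        intro j hj
        have h1 := hrq (a + b) (J₂.add_mem ha hb) j hj
        have h2 := hrq a ha j hj
        have h3 := hrq b hb j hj
        have e : (⟨j * (a + b), Ideal.mul_mem_mul hj (J₂.add_mem ha hb)⟩ : (J₁ * J₂ : Ideal R))
            = ⟨j * a, Ideal.mul_mem_mul hj ha⟩ + ⟨j * b, Ideal.mul_mem_mul hj hb⟩ := by
          apply Subtype.ext; simp [mul_add]
        have := congrArg φ e
        rw [map_add, h1, h2, h3] at this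
        simpa [add_mul] using this
      map_smul' := by
        rintro c ⟨a, ha⟩
        apply isGV_inj h₁
        intro j hj
        have h1 := hrq (c * a) (Ideal.mul_mem_left _ _ ha) j hj
        have h2 := hrq a ha j hj
        have e : (⟨j * (c * a), Ideal.mul_mem_mul hj (Ideal.mul_mem_left _ _ ha)⟩ : (J₁ * J₂ : Ideal R))
            = c • ⟨j * a, Ideal.mul_mem_mul hj ha⟩ := by
          apply Subtype.ext; simp [smul_eq_mul]; ring
        have := congrArg φ e
        rw [map_smul, h1, h2, smul_eq_mul] at this
        simp only [smul_eq_mul, RingHom.id_apply]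
        linear_combination this }
    obtain ⟨s, hs⟩ := isGV_surj h₂ χ
    refine ⟨s, ?_⟩
    have main : ∀ x (hx : x ∈ J₁ * J₂), φ ⟨x, hx⟩ = s * x := by
      intro x hx
      refine Submodule.mul_induction_on' ?_ ?_ hx
      · intro a ha b hb
        have h1 := hrq b hb a ha
        have h2 := hs b hb
        have h2' : rq b = s * b := h2
        rw [h1, h2']; ring
      · intro x' hx' y hy ihx ihy
        have e : (⟨x' + y, Submodule.add_mem _ hx' hy⟩ : (J₁ * J₂ : Ideal R))
            = ⟨x', hx'⟩ + ⟨y, hy⟩ := rfl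
        rw [e, map_add, ihx, ihy, mul_add]
    ext ⟨x, hx⟩
    simp only [LinearMap.smul_apply, smul_eq_mul]
    rw [main x hx]
    rfl

end GVLemmas

section TorsionLemmas

variable {R : Type} [CommRing R]
variable {X Y Z : Type} [AddCommGroup X] [Module R X] [AddCommGroup Y] [Module R Y]
  [AddCommGroup Z] [Module R Z]

lemma isGVTorsion_of_equiv (e : X ≃ₗ[R] Y) (hX : IsGVTorsion R X) : IsGVTorsion R Y := by
  intro y
  obtain ⟨J, hJ, hkill⟩ := hX (e.symm y)
  refine ⟨J, hJ, fun j hj => ?_⟩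
  have : e (j • e.symm y) = e 0 := by rw [hkill j hj]
  simpa [map_smul] using this

lemma isGVTorsion_of_exact (u : X →ₗ[R] Y) (v : Y →ₗ[R] Z) (h : Function.Exact u v)
    (hX : IsGVTorsion R X) (hZ : IsGVTorsion R Z) : IsGVTorsion R Y := by
  intro y
  obtain ⟨J, hJ, hkill⟩ := hZ (v y)
  obtain ⟨s, hspan⟩ := hJ.1
  have key : ∀ j : R, j ∈ (s : Set R) → ∃ K : Ideal R, IsGV R K ∧ ∀ b ∈ K, b • (j • y) = 0 := by
    intro j hj
    have hjJ : j ∈ J := hspan ▸ Ideal.subset_span hj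
    have hv : v (j • y) = 0 := by rw [map_smul, hkill j hjJ]
    obtain ⟨x, hx⟩ := (h (j • y)).1 hv
    obtain ⟨K, hK, hKkill⟩ := hX x
    exact ⟨K, hK, fun b hb => by rw [← hx, ← map_smul, hKkill b hb, map_zero]⟩
  choose! K hK hkillK using key
  set J' : Ideal R := s.prod K with hJ'
  have hJ'GV : IsGV R J' := by
    rw [hJ']
    refine Finset.prod_induction K (fun I => IsGV R I) (fun a b ha hb => isGV_mul ha hb) ?_
      (fun j hj => hK j hj)
    rw [Ideal.one_eq_top]; exact isGV_top
  refine ⟨J * J', isGV_mul hJ hJ'GV, ?_⟩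
  set N : Submodule R R := LinearMap.ker (LinearMap.toSpanSingleton R Y y) with hN
  have hmem : ∀ r : R, r ∈ N ↔ r • y = 0 := fun r => by
    simp [hN, LinearMap.mem_ker, LinearMap.toSpanSingleton_apply]
  have hsub : J * J' ≤ N := by
    rw [Submodule.mul_le]
    intro a ha b hb
    have haN : a ∈ N.colon J' := by
      have hJN : J ≤ N.colon J' := by
        rw [← hspan, Ideal.span_le]
        intro j hj
        rw [SetLike.mem_coe, Submodule.mem_colon]
        intro b' hb'
        rw [hmem]
        have hb'K : b' ∈ K j := by
          have h1 : J' ≤ s.inf K := Ideal.prod_le_inf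
          exact (Finset.inf_le hj : s.inf K ≤ K j) (h1 hb')
        have hzz := hkillK j hj b' hb'K
        rw [smul_eq_mul, mul_comm, mul_smul]
        exact hzz
      exact hJN ha
    rw [Submodule.mem_colon] at haN
    have := haN b hb
    rwa [smul_eq_mul] at this
  intro r hr
  exact (hmem r).1 (hsub hr)

end TorsionLemmas


/-- Bundled data of a short exact sequence in `ModuleCat R` together with chosen
projective resolutions of the two ends. -/
structure HSetup (R : Type) [CommRing R] where
  A : ModuleCat R
  B : ModuleCat R
  C : ModuleCat R
  f : A ⟶ B
  g : B ⟶ C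
  hf : Function.Injective f
  hg : Function.Surjective g
  hfg : LinearMap.range f.hom = LinearMap.ker g.hom
  P : ProjectiveResolution A
  Q : ProjectiveResolution C

namespace HSetup

variable {R : Type} [CommRing R] (S : HSetup R)

abbrev εP : S.P.complex.X 0 ⟶ S.A := S.P.π.f 0
abbrev εQ : S.Q.complex.X 0 ⟶ S.C := S.Q.π.f 0

instance : Epi S.g := (ModuleCat.epi_iff_surjective S.g).2 S.hg
instance : Mono S.f := (ModuleCat.mono_iff_injective S.f).2 S.hf

/-- a lift of εQ through g -/
def σ : S.Q.complex.X 0 ⟶ S.B := Projective.factorThru S.εQ S.g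

lemma σ_g : S.σ ≫ S.g = S.εQ := Projective.factorThru_comp _ _

/-- the short complex P₀ → B → C -/
def S₀ : ShortComplex (ModuleCat R) :=
  ShortComplex.mk (S.εP ≫ S.f) S.g (by
    ext p
    have : S.f (S.εP p) ∈ LinearMap.ker S.g.hom := S.hfg ▸ LinearMap.mem_range_self S.f.hom _
    simpa using this)

lemma S₀_exact : S.S₀.Exact := by
  rw [ShortComplex.moduleCat_exact_iff]
  intro x₂ hx₂
  have : x₂ ∈ LinearMap.ker S.g.hom := hx₂
  rw [← S.hfg] at this
  obtain ⟨a, ha⟩ := this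
  have hsurj : Function.Surjective S.εP := by
    rw [← ModuleCat.epi_iff_surjective]; exact (inferInstance : Epi (S.P.π.f 0))
  obtain ⟨p, hp⟩ := hsurj a
  refine ⟨p, ?_⟩
  show S.f (S.εP p) = x₂
  rw [hp, ha]

/-- θ 0 -/
def θ₀ : S.Q.complex.X 1 ⟶ S.P.complex.X 0 :=
  S.S₀_exact.liftFromProjective (-(S.Q.complex.d 1 0 ≫ S.σ)) (by
    show (-(S.Q.complex.d 1 0 ≫ S.σ)) ≫ S.g = 0
    rw [Preadditive.neg_comp, Category.assoc, S.σ_g]; exact neg_eq_zero.2 S.Q.complex_d_comp_π_f_zero)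

lemma θ₀_prop : S.θ₀ ≫ (S.εP ≫ S.f) = -(S.Q.complex.d 1 0 ≫ S.σ) :=
  ShortComplex.Exact.liftFromProjective_comp _ _ _

/-- θ 1 -/
def θ₁ : S.Q.complex.X 2 ⟶ S.P.complex.X 1 :=
  S.P.exact₀.liftFromProjective (-(S.Q.complex.d 2 1 ≫ S.θ₀)) (by
    refine (cancel_mono S.f).1 ?_
    show ((-(S.Q.complex.d 2 1 ≫ S.θ₀)) ≫ S.εP) ≫ S.f = 0 ≫ S.f
    simp only [Preadditive.neg_comp, Category.assoc, Limits.zero_comp]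
    rw [S.θ₀_prop, Preadditive.comp_neg, neg_neg, ← Category.assoc, S.Q.complex.d_comp_d,
      Limits.zero_comp])

lemma θ₁_prop : S.θ₁ ≫ S.P.complex.d 1 0 = -(S.Q.complex.d 2 1 ≫ S.θ₀) :=
  ShortComplex.Exact.liftFromProjective_comp _ _ _

/-- the chain of θ's, packaged with the linking equations -/
def thetaAux : ∀ k : ℕ,
    Σ' (t : S.Q.complex.X (k + 1) ⟶ S.P.complex.X k)
       (t' : S.Q.complex.X (k + 2) ⟶ S.P.complex.X (k + 1)),
      t' ≫ S.P.complex.d (k + 1) k = -(S.Q.complex.d (k + 2) (k + 1) ≫ t)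
  | 0 => ⟨S.θ₀, S.θ₁, S.θ₁_prop⟩
  | (k + 1) =>
    let ih := thetaAux k
    ⟨ih.2.1,
     (S.P.exact_succ k).liftFromProjective (-(S.Q.complex.d (k + 3) (k + 2) ≫ ih.2.1)) (by
        show (-(S.Q.complex.d (k + 3) (k + 2) ≫ ih.2.1)) ≫ S.P.complex.d (k + 1) k = 0
        rw [Preadditive.neg_comp, Category.assoc, ih.2.2, Preadditive.comp_neg, neg_neg,
          ← Category.assoc, S.Q.complex.d_comp_d, Limits.zero_comp]),
     ShortComplex.Exact.liftFromProjective_comp _ _ _⟩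

def θ (k : ℕ) : S.Q.complex.X (k + 1) ⟶ S.P.complex.X k := (S.thetaAux k).1

lemma θ_zero_prop : S.θ 0 ≫ (S.εP ≫ S.f) = -(S.Q.complex.d 1 0 ≫ S.σ) := S.θ₀_prop

lemma θ_link (k : ℕ) : S.θ (k + 1) ≫ S.P.complex.d (k + 1) k =
    -(S.Q.complex.d (k + 2) (k + 1) ≫ S.θ k) := (S.thetaAux k).2.2

section Pointwise

-- pointwise consequences
lemma θ_zero_apply (q : S.Q.complex.X 1) :
    S.f (S.εP (S.θ 0 q)) = -(S.σ (S.Q.complex.d 1 0 q)) := by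
  have := LinearMap.congr_fun (congrArg ModuleCat.Hom.hom S.θ_zero_prop) q
  simpa using this

lemma θ_link_apply (k : ℕ) (q : S.Q.complex.X (k + 2)) :
    S.P.complex.d (k + 1) k (S.θ (k + 1) q) = -(S.θ k (S.Q.complex.d (k + 2) (k + 1) q)) := by
  have := LinearMap.congr_fun (congrArg ModuleCat.Hom.hom (S.θ_link k)) q
  simpa using this

lemma σ_g_apply (q : S.Q.complex.X 0) : S.g (S.σ q) = S.εQ q := by
  have := LinearMap.congr_fun (congrArg ModuleCat.Hom.hom S.σ_g) q
  simpa using this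

lemma d_d_P (n : ℕ) (p : S.P.complex.X (n + 2)) :
    S.P.complex.d (n + 1) n (S.P.complex.d (n + 2) (n + 1) p) = 0 :=
  calc S.P.complex.d (n + 1) n (S.P.complex.d (n + 2) (n + 1) p)
      = (S.P.complex.d (n + 2) (n + 1) ≫ S.P.complex.d (n + 1) n) p := rfl
    _ = (0 : S.P.complex.X (n + 2) ⟶ S.P.complex.X n) p := by rw [S.P.complex.d_comp_d (n + 2) (n + 1) n]
    _ = 0 := rfl

lemma d_d_Q (n : ℕ) (q : S.Q.complex.X (n + 2)) :
    S.Q.complex.d (n + 1) n (S.Q.complex.d (n + 2) (n + 1) q) = 0 :=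
  calc S.Q.complex.d (n + 1) n (S.Q.complex.d (n + 2) (n + 1) q)
      = (S.Q.complex.d (n + 2) (n + 1) ≫ S.Q.complex.d (n + 1) n) q := rfl
    _ = (0 : S.Q.complex.X (n + 2) ⟶ S.Q.complex.X n) q := by rw [S.Q.complex.d_comp_d (n + 2) (n + 1) n]
    _ = 0 := rfl

lemma d_εP (p : S.P.complex.X 1) : S.εP (S.P.complex.d 1 0 p) = 0 :=
  calc S.εP (S.P.complex.d 1 0 p) = (S.P.complex.d 1 0 ≫ S.εP) p := rfl
    _ = (0 : S.P.complex.X 1 ⟶ S.A) p := congrArg (fun h => h p) (S.P.complex_d_comp_π_f_zero : S.P.complex.d 1 0 ≫ S.εP = 0)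
    _ = 0 := rfl

lemma d_εQ (q : S.Q.complex.X 1) : S.εQ (S.Q.complex.d 1 0 q) = 0 :=
  calc S.εQ (S.Q.complex.d 1 0 q) = (S.Q.complex.d 1 0 ≫ S.εQ) q := rfl
    _ = (0 : S.Q.complex.X 1 ⟶ S.C) q := congrArg (fun h => h q) (S.Q.complex_d_comp_π_f_zero : S.Q.complex.d 1 0 ≫ S.εQ = 0)
    _ = 0 := rfl

-- concrete exactness of P and Q
lemma exact_P0 (p : S.P.complex.X 0) (hp : S.εP p = 0) :
    ∃ p', S.P.complex.d 1 0 p' = p :=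
  (ShortComplex.moduleCat_exact_iff _).1 S.P.exact₀ p hp

lemma exact_Q0 (q : S.Q.complex.X 0) (hq : S.εQ q = 0) :
    ∃ q', S.Q.complex.d 1 0 q' = q :=
  (ShortComplex.moduleCat_exact_iff _).1 S.Q.exact₀ q hq

lemma exact_Ps (n : ℕ) (p : S.P.complex.X (n + 1)) (hp : S.P.complex.d (n + 1) n p = 0) :
    ∃ p', S.P.complex.d (n + 2) (n + 1) p' = p :=
  (ShortComplex.moduleCat_exact_iff _).1 (S.P.exact_succ n) p hp

lemma exact_Qs (n : ℕ) (q : S.Q.complex.X (n + 1)) (hq : S.Q.complex.d (n + 1) n q = 0) :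
    ∃ q', S.Q.complex.d (n + 2) (n + 1) q' = q :=
  (ShortComplex.moduleCat_exact_iff _).1 (S.Q.exact_succ n) q hq

lemma εP_surj : Function.Surjective S.εP := by
  rw [← ModuleCat.epi_iff_surjective]; exact (inferInstance : Epi (S.P.π.f 0))

lemma εQ_surj : Function.Surjective S.εQ := by
  rw [← ModuleCat.epi_iff_surjective]; exact (inferInstance : Epi (S.Q.π.f 0))

end Pointwise

section Complex

/-- the middle object of the horseshoe, degreewise -/
def Xmod (n : ℕ) : ModuleCat R := ModuleCat.of R (S.P.complex.X n × S.Q.complex.X n)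

/-- the horseshoe differential -/
def dX (n : ℕ) : S.Xmod (n + 1) ⟶ S.Xmod n :=
  ModuleCat.ofHom (LinearMap.prod
    ((S.P.complex.d (n + 1) n).hom.comp (LinearMap.fst R _ _) +
      (S.θ n).hom.comp (LinearMap.snd R _ _))
    ((S.Q.complex.d (n + 1) n).hom.comp (LinearMap.snd R _ _)))

@[simp] lemma dX_apply (n : ℕ) (x : S.P.complex.X (n + 1) × S.Q.complex.X (n + 1)) :
    S.dX n x = (S.P.complex.d (n + 1) n x.1 + S.θ n x.2, S.Q.complex.d (n + 1) n x.2) := rfl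

lemma dX_sq (n : ℕ) : S.dX (n + 1) ≫ S.dX n = 0 := by
  apply ModuleCat.hom_ext; apply LinearMap.ext
  rintro ⟨p, q⟩
  show S.dX n (S.dX (n + 1) (p, q)) = 0
  rw [dX_apply, dX_apply]
  apply Prod.ext
  · show S.P.complex.d (n + 1) n (S.P.complex.d (n + 2) (n + 1) p + S.θ (n + 1) q) +
        S.θ n (S.Q.complex.d (n + 2) (n + 1) q) = 0
    rw [map_add, S.d_d_P, S.θ_link_apply]
    simp
  · show S.Q.complex.d (n + 1) n (S.Q.complex.d (n + 2) (n + 1) q) = 0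
    exact S.d_d_Q n q

/-- the horseshoe complex -/
def XC : ChainComplex (ModuleCat R) ℕ := ChainComplex.of S.Xmod S.dX S.dX_sq

lemma XC_d (n : ℕ) : S.XC.d (n + 1) n = S.dX n := ChainComplex.of_d _ _ _

/-- the augmentation of the horseshoe complex -/
def εX : S.Xmod 0 ⟶ S.B := ModuleCat.ofHom (LinearMap.coprod (S.f.hom.comp S.εP.hom) S.σ.hom)

@[simp] lemma εX_apply (x : S.P.complex.X 0 × S.Q.complex.X 0) :
    S.εX x = S.f (S.εP x.1) + S.σ x.2 := rfl

lemma dX_εX : S.XC.d 1 0 ≫ S.εX = 0 := by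
  rw [S.XC_d 0]
  apply ModuleCat.hom_ext; apply LinearMap.ext
  rintro ⟨p, q⟩
  show S.εX (S.dX 0 (p, q)) = 0
  rw [dX_apply, εX_apply]
  show S.f (S.εP (S.P.complex.d 1 0 p + S.θ 0 q)) + S.σ (S.Q.complex.d 1 0 q) = 0
  rw [map_add, map_add, S.d_εP, S.θ_zero_apply]
  simp

/-- the augmentation as a chain map to the single complex -/
def πX : S.XC ⟶ (ChainComplex.single₀ (ModuleCat R)).obj S.B :=
  (ChainComplex.toSingle₀Equiv S.XC S.B).symm ⟨S.εX, S.dX_εX⟩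

lemma πX_f_zero : S.πX.f 0 = S.εX := ChainComplex.toSingle₀Equiv_symm_apply_f_zero _ _

lemma εX_surj : Function.Surjective S.εX := by
  intro b
  obtain ⟨q, hq⟩ := S.εQ_surj (S.g b)
  have : b - S.σ q ∈ LinearMap.ker S.g.hom := by
    rw [LinearMap.mem_ker, map_sub, S.σ_g_apply, hq, sub_self]
  rw [← S.hfg] at this
  obtain ⟨a, ha⟩ := this
  obtain ⟨p, hp⟩ := S.εP_surj a
  exact ⟨(p, q), by rw [εX_apply, hp, ha]; abel⟩

end Complex

section Resolution

instance projective_XC (n : ℕ) : Projective (S.XC.X n) := by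
  have hP : Module.Projective R (S.P.complex.X n) := by
    rw [IsProjective.iff_projective (R := R) (P := S.P.complex.X n)]
    rw [ModuleCat.of_coe]
    exact inferInstance
  have hQ : Module.Projective R (S.Q.complex.X n) := by
    rw [IsProjective.iff_projective (R := R) (P := S.Q.complex.X n)]
    rw [ModuleCat.of_coe]
    exact inferInstance
  have h : Module.Projective R (S.P.complex.X n × S.Q.complex.X n) := inferInstance
  show Projective (S.Xmod n)
  show Projective (ModuleCat.of R (S.P.complex.X n × S.Q.complex.X n))
  rw [← IsProjective.iff_projective]
  exact h

lemma exact_X0 (x : S.Xmod 0) (hx : S.εX x = 0) : ∃ y : S.Xmod 1, S.dX 0 y = x := by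
  obtain ⟨p, q⟩ := x
  rw [S.εX_apply] at hx
  have hqker : S.εQ q = 0 := by
    have h0 : S.g (S.f (S.εP p)) = 0 := by
      have : S.f (S.εP p) ∈ LinearMap.ker S.g.hom := S.hfg ▸ LinearMap.mem_range_self S.f.hom _
      simpa using this
    have h1 := congrArg S.g hx
    rw [map_add, h0, map_zero, zero_add, S.σ_g_apply] at h1
    exact h1
  obtain ⟨q₁, hq₁⟩ := S.exact_Q0 q hqker
  have hfeq : S.f (S.εP p) = S.f (S.εP (S.θ 0 q₁)) := by
    rw [S.θ_zero_apply, hq₁]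
    exact eq_neg_of_add_eq_zero_left hx
  have hker : S.εP (p - S.θ 0 q₁) = 0 := by
    rw [map_sub, sub_eq_zero]
    exact S.hf hfeq
  obtain ⟨p₁, hp₁⟩ := S.exact_P0 _ hker
  refine ⟨(p₁, q₁), ?_⟩
  rw [S.dX_apply]
  exact Prod.ext (by rw [hp₁]; show p - S.θ 0 q₁ + S.θ 0 q₁ = p; abel) hq₁

lemma exact_Xs (n : ℕ) (x : S.Xmod (n + 1)) (hx : S.dX n x = 0) :
    ∃ y : S.Xmod (n + 2), S.dX (n + 1) y = x := by
  obtain ⟨p, q⟩ := x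
  rw [S.dX_apply] at hx
  have h1 : S.P.complex.d (n + 1) n p + S.θ n q = 0 := congrArg Prod.fst hx
  have h2 : S.Q.complex.d (n + 1) n q = 0 := congrArg Prod.snd hx
  obtain ⟨q₁, hq₁⟩ := S.exact_Qs n q h2
  have hker : S.P.complex.d (n + 1) n (p - S.θ (n + 1) q₁) = 0 := by
    rw [map_sub, S.θ_link_apply, hq₁, sub_eq_zero]
    exact (neg_eq_of_add_eq_zero_left h1).symm
  obtain ⟨p₁, hp₁⟩ := S.exact_Ps n _ hker
  refine ⟨(p₁, q₁), ?_⟩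
  rw [S.dX_apply]
  exact Prod.ext (by rw [hp₁]; show p - S.θ (n + 1) q₁ + S.θ (n + 1) q₁ = p; abel) hq₁

/-- the horseshoe resolution of `B` -/
def res : ProjectiveResolution S.B where
  complex := S.XC
  π := S.πX
  quasiIso := ⟨fun n => by
    cases n with
    | zero =>
      rw [ChainComplex.quasiIsoAt₀_iff, ShortComplex.quasiIso_iff_of_zeros']
      · refine ⟨?_, ?_⟩
        · rw [ShortComplex.moduleCat_exact_iff]
          intro x₂ hx₂
          dsimp [HomologicalComplex.shortComplexFunctor'] at x₂ hx₂ ⊢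
          have hx₂' : S.εX x₂ = 0 := by rw [← S.πX_f_zero]; exact hx₂
          obtain ⟨y, hy⟩ := S.exact_X0 x₂ hx₂'
          exact ⟨y, by rw [S.XC_d 0]; exact hy⟩
        · have : Epi S.εX := (ModuleCat.epi_iff_surjective _).2 S.εX_surj
          show Epi (S.πX.f 0)
          rw [S.πX_f_zero]
          exact this
      all_goals rfl
    | succ n =>
      rw [quasiIsoAt_iff_exactAt']
      · rw [HomologicalComplex.exactAt_iff' _ (n + 1 + 1) (n + 1) n (by simp) (by simp)]
        rw [ShortComplex.moduleCat_exact_iff]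
        intro x₂ hx₂
        dsimp [HomologicalComplex.sc', HomologicalComplex.shortComplexFunctor'] at x₂ hx₂ ⊢
        have hx₂' : S.dX n x₂ = 0 := by rw [← S.XC_d n]; exact hx₂
        obtain ⟨y, hy⟩ := S.exact_Xs n x₂ hx₂'
        exact ⟨y, by rw [S.XC_d (n + 1)]; exact hy⟩
      · apply ChainComplex.exactAt_succ_single_obj⟩

end Resolution

section Mapped

/-- inclusion of P into the horseshoe complex -/
def inlC : S.P.complex ⟶ S.XC where
  f n := (ModuleCat.ofHom (LinearMap.inl R (S.P.complex.X n) (S.Q.complex.X n)) : S.P.complex.X n ⟶ S.Xmod n)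
  comm' i j hij := by
    obtain rfl : j + 1 = i := hij
    rw [S.XC_d j]
    apply ModuleCat.hom_ext; apply LinearMap.ext
    intro p
    show S.dX j (p, 0) = (S.P.complex.d (j + 1) j p, 0)
    rw [S.dX_apply]
    exact Prod.ext (by simp) (by simp)

/-- projection of the horseshoe complex onto Q -/
def sndC : S.XC ⟶ S.Q.complex where
  f n := (ModuleCat.ofHom (LinearMap.snd R (S.P.complex.X n) (S.Q.complex.X n)) : S.Xmod n ⟶ S.Q.complex.X n)
  comm' i j hij := by
    obtain rfl : j + 1 = i := hij
    rw [S.XC_d j]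
    apply ModuleCat.hom_ext; apply LinearMap.ext
    rintro ⟨p, q⟩
    show S.Q.complex.d (j + 1) j q = S.Q.complex.d (j + 1) j q
    rfl

variable (F : ModuleCat R ⥤ ModuleCat R) [F.Additive]

/-- the mapped short complex of complexes -/
def mappedS : ShortComplex (HomologicalComplex (ModuleCat R) (ComplexShape.down ℕ)) :=
  ShortComplex.mk ((F.mapHomologicalComplex _).map S.inlC) ((F.mapHomologicalComplex _).map S.sndC)
    (by
      rw [← Functor.map_comp]
      have h : S.inlC ≫ S.sndC = 0 := by
        apply HomologicalComplex.hom_ext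
        intro i
        apply ModuleCat.hom_ext; apply LinearMap.ext
        intro p
        show (0 : S.Q.complex.X i) = 0
        rfl
      rw [h, Functor.map_zero])

/-- the degreewise splitting -/
def mappedSplit (i : ℕ) : ((S.mappedS F).map (HomologicalComplex.eval _ _ i)).Splitting where
  r := F.map (show S.XC.X i ⟶ S.P.complex.X i from ModuleCat.ofHom (LinearMap.fst R (S.P.complex.X i) (S.Q.complex.X i)))
  s := F.map (show S.Q.complex.X i ⟶ S.XC.X i from ModuleCat.ofHom (LinearMap.inr R (S.P.complex.X i) (S.Q.complex.X i)))
  f_r := by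
    have h : S.inlC.f i ≫ (show
        S.XC.X i ⟶ S.P.complex.X i from ModuleCat.ofHom (LinearMap.fst R (S.P.complex.X i) (S.Q.complex.X i))) = 𝟙 (S.P.complex.X i) := by
      apply ModuleCat.hom_ext; apply LinearMap.ext; intro p; rfl
    have key : F.map (S.inlC.f i) ≫ F.map (show
        S.XC.X i ⟶ S.P.complex.X i from ModuleCat.ofHom (LinearMap.fst R (S.P.complex.X i) (S.Q.complex.X i))) = 𝟙 (F.obj (S.P.complex.X i)) := by
      rw [← F.map_comp, h, F.map_id]
    exact key
  s_g := by
    have h : (show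
        S.Q.complex.X i ⟶ S.XC.X i from ModuleCat.ofHom (LinearMap.inr R (S.P.complex.X i) (S.Q.complex.X i))) ≫ S.sndC.f i = 𝟙 (S.Q.complex.X i) := by
      apply ModuleCat.hom_ext; apply LinearMap.ext; intro q; rfl
    have key : F.map (show
        S.Q.complex.X i ⟶ S.XC.X i from ModuleCat.ofHom (LinearMap.inr R (S.P.complex.X i) (S.Q.complex.X i))) ≫ F.map (S.sndC.f i) = 𝟙 (F.obj (S.Q.complex.X i)) := by
      rw [← F.map_comp, h, F.map_id]
    exact key
  id := by
    have h : ((show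
          S.XC.X i ⟶ S.P.complex.X i from ModuleCat.ofHom (LinearMap.fst R (S.P.complex.X i) (S.Q.complex.X i))) ≫ S.inlC.f i) +
        (S.sndC.f i ≫ (show
          S.Q.complex.X i ⟶ S.XC.X i from ModuleCat.ofHom (LinearMap.inr R (S.P.complex.X i) (S.Q.complex.X i)))) = 𝟙 (S.XC.X i) := by
      apply ModuleCat.hom_ext; apply LinearMap.ext
      rintro ⟨p, q⟩
      show ((p, 0) : S.P.complex.X i × S.Q.complex.X i) + (0, q) = (p, q)
      exact Prod.ext (by simp) (by simp)
    have key : F.map (show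
          S.XC.X i ⟶ S.P.complex.X i from ModuleCat.ofHom (LinearMap.fst R (S.P.complex.X i) (S.Q.complex.X i))) ≫ F.map (S.inlC.f i) +
        F.map (S.sndC.f i) ≫ F.map (show
          S.Q.complex.X i ⟶ S.XC.X i from ModuleCat.ofHom (LinearMap.inr R (S.P.complex.X i) (S.Q.complex.X i))) = 𝟙 (F.obj (S.XC.X i)) := by
      rw [← F.map_comp, ← F.map_comp, ← F.map_add, h]
      exact F.map_id _
    exact key

lemma mappedS_shortExact : (S.mappedS F).ShortExact :=
  HomologicalComplex.shortExact_of_degreewise_shortExact _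
    (fun i => (S.mappedSplit F i).shortExact)

lemma exists_exact (n : ℕ) :
    ∃ (X Y Z : ModuleCat R) (_ : X ≅ (F.leftDerived n).obj S.A)
      (_ : Y ≅ (F.leftDerived n).obj S.B) (_ : Z ≅ (F.leftDerived n).obj S.C)
      (u : X ⟶ Y) (v : Y ⟶ Z), Function.Exact u v := by
  have hex := (S.mappedS_shortExact F).homology_exact₂ n
  rw [ShortComplex.ShortExact.moduleCat_exact_iff_function_exact] at hex
  refine ⟨_, _, _, (S.P.isoLeftDerivedObj F n).symm, (S.res.isoLeftDerivedObj F n).symm,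
    (S.Q.isoLeftDerivedObj F n).symm,
    HomologicalComplex.homologyMap (S.mappedS F).f n,
    HomologicalComplex.homologyMap (S.mappedS F).g n, hex⟩

end Mapped

end HSetup


theorem stronglyPhiWFlat_of_ses_middle (R : Type) [CommRing R] (hNP : (nilradical R).IsPrime)
    (A B C : Type) [AddCommGroup A] [Module R A] [AddCommGroup B] [Module R B]
    [AddCommGroup C] [Module R C]
    (f : A →ₗ[R] B) (g : B →ₗ[R] C) (hf : Function.Injective f)
    (hg : Function.Surjective g) (hfg : LinearMap.range f = LinearMap.ker g)
    (hA : IsStronglyPhiWFlat R A) (hC : IsStronglyPhiWFlat R C) :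
    IsStronglyPhiWFlat R B := by
  intro T iT mT hT n hn
  let S : HSetup R :=
    { A := ModuleCat.of R A
      B := ModuleCat.of R B
      C := ModuleCat.of R C
      f := ModuleCat.ofHom f
      g := ModuleCat.ofHom g
      hf := hf
      hg := hg
      hfg := hfg
      P := ProjectiveResolution.of (ModuleCat.of R A)
      Q := ProjectiveResolution.of (ModuleCat.of R C) }
  obtain ⟨X, Y, Z, eX, eY, eZ, u, v, hex⟩ :=
    S.exists_exact ((MonoidalCategory.tensoringLeft (ModuleCat R)).obj (ModuleCat.of R T)) n
  have hXt : IsGVTorsion R X :=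
    isGVTorsion_of_equiv eX.toLinearEquiv.symm (hA T iT mT hT n hn)
  have hZt : IsGVTorsion R Z :=
    isGVTorsion_of_equiv eZ.toLinearEquiv.symm (hC T iT mT hT n hn)
  have hYt : IsGVTorsion R Y := isGVTorsion_of_exact u.hom v.hom hex hXt hZt
  exact isGVTorsion_of_equiv eY.toLinearEquiv hYt
end
end
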